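/- arXiv:2203.17097 — 5 statements merged into one kernel-verified Lean document; each statement's English description precedes it below -/
import Mathlib

section
/- The local complex blow-down α_ℂ is continuous, proper and surjective, and its restriction to α_ℂ⁻¹(U), where U = {z ∈ ℂⁿ : z₁⋯z_k ≠ 0}, is a homeomorphism onto U. -/
/-- `S¹ × [0,∞)`, where `S¹ ⊂ ℂ` is the unit circle (Mathlib's `Circle`). -/
abbrev CircleRay : Type := Circle × (Set.Ici (0 : ℝ))

/-- The local complex blow-down
`α_ℂ : ((S¹ × [0,∞))^k) × ℂ^{n−k} → ℂⁿ = ℂ^k × ℂ^{n−k}`,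
`α_ℂ(((θ₁,r₁),…,(θ_k,r_k)), z) = (θ₁r₁, …, θ_k r_k, z)`. -/
noncomputable def blowDownC (k m : ℕ) (p : (Fin k → CircleRay) × (Fin m → ℂ)) :
    (Fin k → ℂ) × (Fin m → ℂ) :=
  (fun i => ((p.1 i).1 : ℂ) * (((p.1 i).2 : ℝ) : ℂ), p.2)

/-- The set `U = {z ∈ ℂⁿ : z₁⋯z_k ≠ 0}`. -/
def UsetC (k m : ℕ) : Set ((Fin k → ℂ) × (Fin m → ℂ)) := {z | ∏ i, z.1 i ≠ 0}

/-- one-variable blow-down -/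
noncomputable def bd1 (p : CircleRay) : ℂ := (p.1 : ℂ) * ((p.2 : ℝ) : ℂ)

lemma bd1_continuous : Continuous bd1 := by
  apply Continuous.mul
  · exact continuous_subtype_val.comp continuous_fst
  · exact Complex.continuous_ofReal.comp (continuous_subtype_val.comp continuous_snd)

lemma bd1_proper : IsProperMap bd1 := by
  rw [isProperMap_iff_isCompact_preimage]
  refine ⟨bd1_continuous, fun K hK => ?_⟩
  obtain ⟨R, hR⟩ := hK.isBounded.subset_closedBall 0
  have hsub : bd1 ⁻¹' K ⊆ (Set.univ : Set Circle) ×ˢ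
      ((Subtype.val ⁻¹' Set.Icc (0:ℝ) R : Set (Set.Ici (0:ℝ)))) := by
    rintro ⟨θ, r⟩ hp
    have h1 : bd1 (θ, r) ∈ Metric.closedBall (0:ℂ) R := hR hp
    have h2 : ‖bd1 (θ, r)‖ ≤ R := by simpa [Metric.mem_closedBall] using h1
    have h3 : ‖bd1 (θ, r)‖ = (r : ℝ) := by
      simp [bd1, abs_of_nonneg (show (0:ℝ) ≤ r from r.2), Circle.norm_coe]
    exact ⟨trivial, r.2, by rw [h3] at h2; exact h2⟩
  have hcomp : IsCompact ((Set.univ : Set Circle) ×ˢ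
      ((Subtype.val ⁻¹' Set.Icc (0:ℝ) R : Set (Set.Ici (0:ℝ))))) :=
    isCompact_univ.prod
      ((Topology.IsClosedEmbedding.subtypeVal isClosed_Ici).isCompact_preimage isCompact_Icc)
  exact hcomp.of_isClosed_subset (hK.isClosed.preimage bd1_continuous) hsub

lemma UsetC_ne_zero {k m : ℕ} (q : UsetC k m) (i : Fin k) :
    (q : (Fin k → ℂ) × (Fin m → ℂ)).1 i ≠ 0 := by
  obtain ⟨⟨z, w⟩, hq⟩ := q
  exact fun h => hq (Finset.prod_eq_zero (Finset.mem_univ i) h)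

/-- explicit inverse on `U` -/
noncomputable def invAux (k m : ℕ) (q : UsetC k m) : (Fin k → CircleRay) × (Fin m → ℂ) :=
  (fun i => (⟨(q : (Fin k → ℂ) × (Fin m → ℂ)).1 i / (‖(q : (Fin k → ℂ) × (Fin m → ℂ)).1 i‖ : ℂ),
      mem_sphere_zero_iff_norm.2 (by
        rw [norm_div, Complex.norm_real, Real.norm_eq_abs, abs_of_nonneg (norm_nonneg _),
          div_self (norm_ne_zero_iff.2 (UsetC_ne_zero q i))])⟩,
    ⟨‖(q : (Fin k → ℂ) × (Fin m → ℂ)).1 i‖, norm_nonneg _⟩),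
   (q : (Fin k → ℂ) × (Fin m → ℂ)).2)

lemma blowDownC_invAux (k m : ℕ) (q : UsetC k m) :
    blowDownC k m (invAux k m q) = (q : (Fin k → ℂ) × (Fin m → ℂ)) := by
  refine Prod.ext (funext fun i => ?_) rfl
  show (q : (Fin k → ℂ) × (Fin m → ℂ)).1 i / (‖(q : (Fin k → ℂ) × (Fin m → ℂ)).1 i‖ : ℂ)
      * (‖(q : (Fin k → ℂ) × (Fin m → ℂ)).1 i‖ : ℂ) = _
  rw [div_mul_cancel₀]
  exact_mod_cast norm_ne_zero_iff.2 (UsetC_ne_zero q i)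

lemma invAux_continuous (k m : ℕ) : Continuous (invAux k m) := by
  refine Continuous.prodMk (continuous_pi fun i => Continuous.prodMk ?_ ?_) ?_
  · refine Continuous.subtype_mk ?_ _
    refine Continuous.div ?_ ?_ ?_
    · exact (continuous_apply i).comp (continuous_fst.comp continuous_subtype_val)
    · exact Complex.continuous_ofReal.comp
        (continuous_norm.comp ((continuous_apply i).comp (continuous_fst.comp continuous_subtype_val)))
    · intro q
      exact_mod_cast norm_ne_zero_iff.2 (UsetC_ne_zero q i)
  · exact Continuous.subtype_mk
      (continuous_norm.comp ((continuous_apply i).comp (continuous_fst.comp continuous_subtype_val))) _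
  · exact continuous_snd.comp continuous_subtype_val

/-- The local complex blow-down `α_ℂ` is continuous, proper and surjective, and its
restriction to `α_ℂ⁻¹(U)`, where `U = {z ∈ ℂⁿ : z₁⋯z_k ≠ 0}`, is a homeomorphism
onto `U`. (Here `n = k + m ≥ k ≥ 1`.) -/
theorem blowDownC_properties (k m : ℕ) (hk : 1 ≤ k) :
    Continuous (blowDownC k m) ∧ IsProperMap (blowDownC k m) ∧
    Function.Surjective (blowDownC k m) ∧
    ∃ e : (blowDownC k m ⁻¹' UsetC k m) ≃ₜ (UsetC k m),
      ∀ p : (blowDownC k m ⁻¹' UsetC k m),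
        (e p : (Fin k → ℂ) × (Fin m → ℂ)) =
          blowDownC k m (p : (Fin k → CircleRay) × (Fin m → ℂ)) := by
  have hcont : Continuous (blowDownC k m) := by
    refine Continuous.prodMk (continuous_pi fun i => ?_) continuous_snd
    exact bd1_continuous.comp ((continuous_apply i).comp continuous_fst)
  have hproper : IsProperMap (blowDownC k m) := by
    have h1 : IsProperMap (fun x : Fin k → CircleRay => fun i => bd1 (x i)) :=
      IsProperMap.pi_map fun _ => bd1_proper
    have h2 := h1.prodMap (isProperMap_id (X := Fin m → ℂ))
    have : blowDownC k m = Prod.map (fun x : Fin k → CircleRay => fun i => bd1 (x i)) id := by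
      ext p i <;> rfl
    rw [this]; exact h2
  have hsurj : Function.Surjective (blowDownC k m) := by
    rintro ⟨z, w⟩
    refine ⟨⟨fun i => (Circle.exp (Complex.arg (z i)), ⟨‖z i‖, norm_nonneg _⟩), w⟩, ?_⟩
    unfold blowDownC
    refine Prod.ext (funext fun i => ?_) rfl
    simp only [Circle.coe_exp]
    rw [mul_comm]
    exact Complex.norm_mul_exp_arg_mul_I (z i)
  refine ⟨hcont, hproper, hsurj, ?_⟩
  -- the homeomorphism
  let toF : (blowDownC k m ⁻¹' UsetC k m) → UsetC k m := fun p => ⟨blowDownC k m p, p.2⟩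
  let invF : UsetC k m → (blowDownC k m ⁻¹' UsetC k m) := fun q =>
    ⟨invAux k m q, by
      simp only [Set.mem_preimage, blowDownC_invAux]
      exact q.2⟩
  have hright : ∀ q, toF (invF q) = q := by
    intro q
    apply Subtype.ext
    exact blowDownC_invAux k m q
  have hleft : ∀ p, invF (toF p) = p := by
    rintro ⟨⟨f, w⟩, hp⟩
    apply Subtype.ext
    refine Prod.ext (funext fun i => ?_) rfl
    have hne : ((f i).1 : ℂ) * (((f i).2 : ℝ) : ℂ) ≠ 0 := by
      have : blowDownC k m (f, w) ∈ UsetC k m := hp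
      exact fun h => this (Finset.prod_eq_zero (Finset.mem_univ i) h)
    have hr : ((f i).2 : ℝ) ≠ 0 := by
      intro h
      apply hne
      rw [h]; simp
    have hnorm : ‖((f i).1 : ℂ) * (((f i).2 : ℝ) : ℂ)‖ = ((f i).2 : ℝ) := by
      simp [abs_of_nonneg (show (0:ℝ) ≤ (f i).2 from (f i).2.2), Circle.norm_coe]
    show ((⟨_, _⟩ : Circle), (⟨_, _⟩ : Set.Ici (0:ℝ))) = f i
    refine Prod.ext (Circle.ext ?_) (Subtype.ext ?_)
    · show ((f i).1 : ℂ) * (((f i).2 : ℝ) : ℂ) / (‖((f i).1 : ℂ) * (((f i).2 : ℝ) : ℂ)‖ : ℂ)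
        = ((f i).1 : ℂ)
      rw [hnorm, mul_div_assoc, div_self (by exact_mod_cast hr), mul_one]
    · exact hnorm
  refine ⟨⟨⟨toF, invF, hleft, hright⟩, ?_, ?_⟩, fun p => rfl⟩
  · exact Continuous.subtype_mk (hcont.comp continuous_subtype_val) _
  · exact Continuous.subtype_mk (invAux_continuous k m) _
end

section
/- Let S = {x ∈ ℝⁿ : x₁ = ⋯ = x_k = 0} and let α be the local real blow-down. Then α⁻¹(S) = {(((ε₁,0),…,(ε_k,0)), y) : ε ∈ {-1,1}^k, y ∈ ℝ^{n−k}}, the restriction α : α⁻¹(S) → S is a covering map, every fibre of this restriction has exactly 2^k elements, and α⁻¹(S) is homeomorphic over S to the trivial cover {-1,1}^k × S. -/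
/-- The half-ray with signs `{-1,1} × [0,∞)` with its subspace (product) topology. -/
abbrev SignRay : Type := ({-1, 1} : Set ℝ) × (Set.Ici (0 : ℝ))

/-- The local real blow-down
`α(((ε₁,r₁),…,(ε_k,r_k)), y) = (ε₁r₁, …, ε_k r_k, y)`. -/
def blowDownR (k m : ℕ) (p : (Fin k → SignRay) × (Fin m → ℝ)) :
    (Fin k → ℝ) × (Fin m → ℝ) :=
  (fun i => ((p.1 i).1 : ℝ) * ((p.1 i).2 : ℝ), p.2)

/-- The stratum `S = {x ∈ ℝⁿ : x₁ = ⋯ = x_k = 0}`. -/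
def Sset (k m : ℕ) : Set ((Fin k → ℝ) × (Fin m → ℝ)) := {x | ∀ i, x.1 i = 0}

lemma signCoe_ne_zero (e : ({-1,1} : Set ℝ)) : (e : ℝ) ≠ 0 := by
  rcases e.2 with h | h <;> rw [h] <;> norm_num

lemma mem_pre_iff (k m : ℕ) (q : (Fin k → SignRay) × (Fin m → ℝ)) :
    q ∈ blowDownR k m ⁻¹' Sset k m ↔ ∀ i, ((q.1 i).2 : ℝ) = 0 := by
  constructor
  · intro h i
    have := h i
    simp only [blowDownR] at this
    exact (mul_eq_zero.1 this).resolve_left (signCoe_ne_zero _)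
  · intro h i
    simp only [Sset, blowDownR, Set.mem_setOf_eq, h i, mul_zero]

lemma blowDownR_continuous (k m : ℕ) : Continuous (blowDownR k m) := by
  refine Continuous.prodMk (continuous_pi fun i => ?_) continuous_snd
  exact ((continuous_subtype_val.comp ((continuous_apply i).comp continuous_fst).fst).mul
    (continuous_subtype_val.comp ((continuous_apply i).comp continuous_fst).snd))

def eFun (k m : ℕ) (q : blowDownR k m ⁻¹' Sset k m) :
    (Fin k → ({-1,1} : Set ℝ)) × (Sset k m) :=
  (fun i => (q.val.1 i).1, (Sset k m).restrictPreimage (blowDownR k m) q)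

def eInv (k m : ℕ) (z : (Fin k → ({-1,1} : Set ℝ)) × (Sset k m)) :
    blowDownR k m ⁻¹' Sset k m :=
  ⟨((fun i => (z.1 i, ⟨0, Set.mem_Ici.2 le_rfl⟩)), z.2.val.2), by
    intro i; simp [blowDownR]⟩

lemma left_inv' (k m : ℕ) : Function.LeftInverse (eInv k m) (eFun k m) := by
  intro q
  apply Subtype.ext
  refine Prod.ext (funext fun i => Prod.ext rfl (Subtype.ext ?_)) rfl
  exact ((mem_pre_iff k m q.val).1 q.2 i).symm

lemma right_inv' (k m : ℕ) : Function.RightInverse (eInv k m) (eFun k m) := by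
  intro z
  refine Prod.ext rfl (Subtype.ext ?_)
  show blowDownR k m (eInv k m z).val = z.2.val
  refine Prod.ext (funext fun i => ?_) rfl
  show ((z.1 i : ℝ)) * (0 : ℝ) = z.2.val.1 i
  rw [mul_zero]
  exact (z.2.2 i).symm

noncomputable def eHomeo (k m : ℕ) :
    (blowDownR k m ⁻¹' Sset k m) ≃ₜ ((Fin k → ({-1,1} : Set ℝ)) × (Sset k m)) where
  toFun := eFun k m
  invFun := eInv k m
  left_inv := left_inv' k m
  right_inv := right_inv' k m
  continuous_toFun := by
    unfold eFun
    apply Continuous.prodMk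
    · exact continuous_pi fun i =>
        (((continuous_apply i).comp continuous_subtype_val.fst).fst)
    · exact (blowDownR_continuous k m).restrictPreimage
  continuous_invFun := by
    apply Continuous.subtype_mk
    refine Continuous.prodMk (continuous_pi fun i => ?_)
      (continuous_snd.comp (continuous_subtype_val.comp continuous_snd))
    exact Continuous.prodMk ((continuous_apply i).comp continuous_fst) continuous_const

noncomputable def trivE (k m : ℕ) :
    Bundle.Trivialization (Fin k → ({-1,1} : Set ℝ)) ((Sset k m).restrictPreimage (blowDownR k m)) where
  toOpenPartialHomeomorph :=
    ((eHomeo k m).trans (Homeomorph.prodComm _ _)).toOpenPartialHomeomorph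
  baseSet := Set.univ
  open_baseSet := isOpen_univ
  source_eq := by simp [Homeomorph.toOpenPartialHomeomorph]
  target_eq := by simp [Homeomorph.toOpenPartialHomeomorph]
  proj_toFun := fun p _ => rfl

instance : Finite ({-1,1} : Set ℝ) := Set.toFinite _

lemma card_sign : Nat.card ({-1,1} : Set ℝ) = 2 := by
  rw [Nat.card_coe_set_eq, Set.ncard_pair (by norm_num)]

/-- Let `S = {x ∈ ℝⁿ : x₁ = ⋯ = x_k = 0}` and `α` the local real blow-down (with
`n = k + m ≥ k ≥ 1`). Then `α⁻¹(S) = {(((ε₁,0),…,(ε_k,0)), y)}` is the set of points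
all of whose `[0,∞)`-coordinates vanish, the restriction `α : α⁻¹(S) → S` is a
covering map, every fibre of this restriction has exactly `2^k` elements, and
`α⁻¹(S)` is homeomorphic over `S` to the trivial cover `{-1,1}^k × S`. -/
theorem blowDownR_cover_stratum (k m : ℕ) (hk : 1 ≤ k) :
    blowDownR k m ⁻¹' Sset k m
        = {q : (Fin k → SignRay) × (Fin m → ℝ) | ∀ i, ((q.1 i).2 : ℝ) = 0} ∧
    IsCoveringMap ((Sset k m).restrictPreimage (blowDownR k m)) ∧
    (∀ p : Sset k m,
      Nat.card (((Sset k m).restrictPreimage (blowDownR k m)) ⁻¹' ({p} : Set (Sset k m)))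
        = 2 ^ k) ∧
    ∃ e : (blowDownR k m ⁻¹' Sset k m) ≃ₜ ((Fin k → ({-1, 1} : Set ℝ)) × (Sset k m)),
      ∀ q, (e q).2 = (Sset k m).restrictPreimage (blowDownR k m) q := by
  refine ⟨Set.ext (mem_pre_iff k m), ?_, ?_, ⟨eHomeo k m, fun q => rfl⟩⟩
  · intro x
    exact IsEvenlyCovered.to_isEvenlyCovered_preimage
      (IsEvenlyCovered.of_trivialization (t := trivE k m) (Set.mem_univ x))
  · intro p
    have key : (((Sset k m).restrictPreimage (blowDownR k m)) ⁻¹' ({p} : Set (Sset k m)))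
        ≃ (Fin k → ({-1,1} : Set ℝ)) := by
      refine ⟨fun q => (eHomeo k m q.val).1, fun ε => ⟨eInv k m (ε, p), ?_⟩, ?_, ?_⟩
      · show (Sset k m).restrictPreimage (blowDownR k m) (eInv k m (ε, p)) = p
        exact congrArg Prod.snd (right_inv' k m (ε, p))
      · intro q
        apply Subtype.ext
        have hp : ((eHomeo k m q.val).1, p) = eHomeo k m q.val := by
          refine Prod.ext rfl ?_
          exact (q.2 : (Sset k m).restrictPreimage (blowDownR k m) q.val = p).symm
        show eInv k m ((eHomeo k m q.val).1, p) = q.val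
        rw [hp]
        exact left_inv' k m q.val
      · intro ε
        exact congrArg Prod.fst (right_inv' k m (ε, p))
    rw [Nat.card_congr key, Nat.card_pi, Finset.prod_const, card_sign, Finset.card_univ,
      Fintype.card_fin]
end

section
/- Let k ≥ 1 and let D = {x ∈ [0,∞)^k : x₁⋯x_k = 0}. There exists a homeomorphism H : D × [0,∞) → [0,∞)^k such that H(x,t)₁⋯H(x,t)_k = t and H(x,0) = x for all x ∈ D and t ∈ [0,∞). -/
/-- The closed orthant `[0,∞)^k` with its (subspace/product) topology. -/
abbrev Orthant (k : ℕ) : Type := Fin k → (Set.Ici (0 : ℝ))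

/-- The boundary `D = {x ∈ [0,∞)^k : x₁⋯x_k = 0}` of the closed orthant. -/
def orthantBoundary (k : ℕ) : Set (Orthant k) := {x | ∏ i, (x i : ℝ) = 0}

section StraightenAux

variable {k : ℕ} [NeZero k]

/-- The minimum of the coordinates. -/
noncomputable def omin (y : Orthant k) : ℝ :=
  Finset.univ.inf' Finset.univ_nonempty fun i => (y i : ℝ)

lemma omin_le (y : Orthant k) (i : Fin k) : omin y ≤ (y i : ℝ) :=
  Finset.inf'_le _ (Finset.mem_univ i)

lemma omin_nonneg (y : Orthant k) : 0 ≤ omin y :=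
  Finset.le_inf' _ _ fun i _ => (y i).2

lemma exists_omin (y : Orthant k) : ∃ i, (y i : ℝ) = omin y := by
  obtain ⟨i, -, h⟩ := Finset.exists_mem_eq_inf' (Finset.univ_nonempty)
    (fun i => ((y i : ℝ)))
  exact ⟨i, h.symm⟩

lemma continuous_omin : Continuous (omin (k := k)) :=
  Continuous.finset_inf'_apply Finset.univ_nonempty fun i _ =>
    continuous_subtype_val.comp (continuous_apply i)

/-- If `x ∈ D` then some coordinate vanishes. -/
lemma exists_zero_of_mem {x : Orthant k} (hx : x ∈ orthantBoundary k) :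
    ∃ i, (x i : ℝ) = 0 := by
  obtain ⟨i, -, h⟩ := Finset.prod_eq_zero_iff.mp hx
  exact ⟨i, h⟩

lemma omin_eq_zero_of_mem {x : Orthant k} (hx : x ∈ orthantBoundary k) :
    omin x = 0 := by
  obtain ⟨i, hi⟩ := exists_zero_of_mem hx
  exact le_antisymm (hi ▸ omin_le x i) (omin_nonneg x)

/-- The inverse of the straightening map: `y ↦ (y - min y, ∏ y)`. -/
noncomputable def Gmap (y : Orthant k) : (orthantBoundary k) × (Set.Ici (0 : ℝ)) :=
  (⟨fun i => ⟨(y i : ℝ) - omin y, sub_nonneg.2 (omin_le y i)⟩, by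
      obtain ⟨i, hi⟩ := exists_omin y
      exact Finset.prod_eq_zero (Finset.mem_univ i) (by show (y i : ℝ) - omin y = 0; rw [hi, sub_self])⟩,
   ⟨∏ i, (y i : ℝ), Set.mem_Ici.mpr (Finset.prod_nonneg fun i _ => (y i).2)⟩)

lemma Gmap_continuous : Continuous (Gmap (k := k)) := by
  apply Continuous.prodMk
  · apply Continuous.subtype_mk
    apply continuous_pi
    intro i
    exact Continuous.subtype_mk
      (((continuous_subtype_val.comp (continuous_apply i))).sub continuous_omin) _
  · exact Continuous.subtype_mk (continuous_finset_prod _ fun i _ =>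
      continuous_subtype_val.comp (continuous_apply i)) _

lemma prod_add_lt {x : Fin k → ℝ} (hx : ∀ i, 0 ≤ x i) {s t : ℝ} (hs : 0 ≤ s) (hst : s < t)
    (h0 : ∃ i, x i = 0) : ∏ i, (x i + s) < ∏ i, (x i + t) := by
  have ht : 0 < t := hs.trans_lt hst
  have hpos : 0 < ∏ i, (x i + t) := Finset.prod_pos fun i _ => by linarith [hx i]
  rcases eq_or_lt_of_le hs with h | h
  · obtain ⟨i, hi⟩ := h0
    have hz : ∏ i, (x i + s) = 0 :=
      Finset.prod_eq_zero (Finset.mem_univ i) (by rw [hi, ← h]; ring)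
    simpa [hz] using hpos
  · exact Finset.prod_lt_prod_of_nonempty (fun i _ => by linarith [hx i])
      (fun i _ => by linarith) Finset.univ_nonempty

lemma Gmap_injective : Function.Injective (Gmap (k := k)) := by
  have key : ∀ y y' : Orthant k, Gmap y = Gmap y' → omin y < omin y' → False := by
    intro y y' h hlt
    have h1 : ∀ i, (y i : ℝ) - omin y = (y' i : ℝ) - omin y' := fun i =>
      congrArg (fun p : (orthantBoundary k) × (Set.Ici (0 : ℝ)) =>
        (((p.1 : Orthant k) i : ℝ))) h
    have h2 : ∏ i, (y i : ℝ) = ∏ i, (y' i : ℝ) :=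
      congrArg (fun p : (orthantBoundary k) × (Set.Ici (0 : ℝ)) => ((p.2 : ℝ))) h
    set x : Fin k → ℝ := fun i => (y i : ℝ) - omin y with hxdef
    have hx : ∀ i, 0 ≤ x i := fun i => sub_nonneg.2 (omin_le y i)
    have h0 : ∃ i, x i = 0 := by
      obtain ⟨i, hi⟩ := exists_omin y
      exact ⟨i, by simp only [hxdef]; rw [hi, sub_self]⟩
    have hy : ∀ i, (y i : ℝ) = x i + omin y := fun i => by simp [hxdef]
    have hy' : ∀ i, (y' i : ℝ) = x i + omin y' := fun i => by
      have := h1 i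
      simp only [hxdef]
      linarith
    have hlt' : ∏ i, (x i + omin y) < ∏ i, (x i + omin y') :=
      prod_add_lt hx (omin_nonneg y) hlt h0
    rw [Finset.prod_congr rfl fun i _ => (hy i).symm,
        Finset.prod_congr rfl fun i _ => (hy' i).symm] at hlt'
    exact absurd h2 hlt'.ne
  intro y y' h
  have homin : omin y = omin y' := by
    rcases lt_trichotomy (omin y) (omin y') with hlt | heq | hlt
    · exact absurd (key y y' h hlt) (by simp)
    · exact heq
    · exact absurd (key y' y h.symm hlt) (by simp)
  have h1 : ∀ i, (y i : ℝ) - omin y = (y' i : ℝ) - omin y' := fun i =>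
    congrArg (fun p : (orthantBoundary k) × (Set.Ici (0 : ℝ)) =>
      (((p.1 : Orthant k) i : ℝ))) h
  funext i
  apply Subtype.ext
  have := h1 i
  rw [homin] at this
  linarith

lemma Gmap_surjective : Function.Surjective (Gmap (k := k)) := by
  have hk : 1 ≤ k := Nat.one_le_iff_ne_zero.mpr (NeZero.ne k)
  rintro ⟨⟨x, hx⟩, t, ht⟩
  have hx' : ∏ i, (x i : ℝ) = 0 := hx
  set f : ℝ → ℝ := fun s => ∏ i, ((x i : ℝ) + s) with hfdef
  have hf : Continuous f := continuous_finset_prod _ fun i _ => by fun_prop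
  have hf0 : f 0 = 0 := by simpa [hfdef] using hx'
  set b : ℝ := max t 1 with hbdef
  have hb1 : (1 : ℝ) ≤ b := le_max_right t 1
  have hb0 : (0 : ℝ) ≤ b := zero_le_one.trans hb1
  have hub : t ≤ f b := by
    have h1 : b ^ k ≤ f b :=
      calc b ^ k = ∏ _i : Fin k, b := by
            rw [Finset.prod_const, Finset.card_univ, Fintype.card_fin]
        _ ≤ f b := Finset.prod_le_prod (fun i _ => hb0)
            (fun i _ => le_add_of_nonneg_left (x i).2)
    calc t ≤ b := le_max_left t 1
      _ ≤ b ^ k := le_self_pow₀ hb1 (NeZero.ne k)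
      _ ≤ f b := h1
  have hmem : t ∈ Set.Icc (f 0) (f b) := ⟨by rw [hf0]; exact ht, hub⟩
  obtain ⟨s, hs_mem, hfs⟩ := intermediate_value_Icc hb0 hf.continuousOn hmem
  have hs0 : 0 ≤ s := hs_mem.1
  set y : Orthant k := fun i => ⟨(x i : ℝ) + s, add_nonneg (x i).2 hs0⟩ with hydef
  refine ⟨y, ?_⟩
  have homin : omin y = s := by
    obtain ⟨i0, hi0⟩ := exists_zero_of_mem (x := x) hx
    refine le_antisymm ?_ (Finset.le_inf' _ _ fun i _ => le_add_of_nonneg_left (x i).2)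
    have := omin_le y i0
    simp only [hydef, hi0] at this
    linarith
  apply Prod.ext
  · apply Subtype.ext
    funext i
    apply Subtype.ext
    show (y i : ℝ) - omin y = (x i : ℝ)
    rw [homin]
    show ((x i : ℝ) + s) - s = (x i : ℝ)
    ring
  · exact Subtype.ext hfs

lemma Gmap_isCompact_preimage (K : Set ((orthantBoundary k) × (Set.Ici (0 : ℝ))))
    (hK : IsCompact K) : IsCompact (Gmap ⁻¹' K) := by
  -- get a uniform bound on elements of K
  set g : (orthantBoundary k) × (Set.Ici (0 : ℝ)) → ℝ :=
    fun p => (∑ i, ((p.1 : Orthant k) i : ℝ)) + (p.2 : ℝ) with hgdef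
  have hg : Continuous g := by
    apply Continuous.add
    · exact continuous_finset_sum _ fun i _ =>
        continuous_subtype_val.comp ((continuous_apply i).comp
          (continuous_subtype_val.comp continuous_fst))
    · exact continuous_subtype_val.comp continuous_snd
  obtain ⟨C0, hC0⟩ := (hK.image hg).bddAbove
  set C : ℝ := max C0 0 with hCdef
  have hC_nonneg : 0 ≤ C := le_max_right _ _
  have hbound : ∀ p ∈ K, (∀ i, ((p.1 : Orthant k) i : ℝ) ≤ C) ∧ (p.2 : ℝ) ≤ C := by
    intro p hp
    have hgp : g p ≤ C :=
      le_trans (hC0 (Set.mem_image_of_mem g hp)) (le_max_left _ _)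
    have hsum : ∀ i, ((p.1 : Orthant k) i : ℝ) ≤ ∑ i, ((p.1 : Orthant k) i : ℝ) :=
      fun i => Finset.single_le_sum (f := fun j => ((p.1 : Orthant k) j : ℝ)) (fun j _ => Set.mem_Ici.mp ((p.1 : Orthant k) j).2) (Finset.mem_univ i)
    constructor
    · intro i
      have h2 : (0 : ℝ) ≤ (p.2 : ℝ) := p.2.2
      have := hsum i
      simp only [hgdef] at hgp
      linarith
    · have h1 : 0 ≤ ∑ i, ((p.1 : Orthant k) i : ℝ) :=
        Finset.sum_nonneg fun i _ => ((p.1 : Orthant k) i).2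
      simp only [hgdef] at hgp
      linarith
  set M : ℝ := C + max C 1 with hMdef
  have hM0 : 0 ≤ M := by positivity
  -- the preimage is contained in the compact box [0, M]^k
  have hsub : Gmap ⁻¹' K ⊆ Set.univ.pi fun _ : Fin k =>
      {v : Set.Ici (0 : ℝ) | (v : ℝ) ≤ M} := by
    intro y hy
    obtain ⟨hx_le, ht_le⟩ := hbound _ hy
    have hmy : omin y ≤ max C 1 := by
      by_contra hcon
      push_neg at hcon
      have h1 : (1 : ℝ) ≤ omin y := (le_max_right C 1).trans hcon.le
      have h2 : omin y ^ k ≤ ∏ i, (y i : ℝ) :=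
        calc omin y ^ k = ∏ _i : Fin k, omin y := by
              rw [Finset.prod_const, Finset.card_univ, Fintype.card_fin]
          _ ≤ ∏ i, (y i : ℝ) := Finset.prod_le_prod (fun i _ => omin_nonneg y)
              (fun i _ => omin_le y i)
      have h3 : omin y ≤ omin y ^ k := le_self_pow₀ h1 (NeZero.ne k)
      have h4 : (∏ i, (y i : ℝ)) ≤ C := ht_le
      have h5 : C < omin y := lt_of_le_of_lt (le_max_left C 1) hcon
      linarith
    intro i _
    have hxi : (y i : ℝ) - omin y ≤ C := hx_le i
    show (y i : ℝ) ≤ M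
    simp only [hMdef]
    linarith
  -- the box is compact
  have hbox : IsCompact (Set.univ.pi fun _ : Fin k =>
      {v : Set.Ici (0 : ℝ) | (v : ℝ) ≤ M}) := by
    apply isCompact_univ_pi
    intro i
    have himg : (fun r : ℝ => (⟨max r 0, le_max_right r 0⟩ : Set.Ici (0 : ℝ))) ''
        Set.Icc 0 M = {v : Set.Ici (0 : ℝ) | (v : ℝ) ≤ M} := by
      ext v
      constructor
      · rintro ⟨r, hr, rfl⟩
        simpa [max_eq_left hr.1] using hr.2
      · intro hv
        exact ⟨(v : ℝ), ⟨v.2, hv⟩, Subtype.ext (max_eq_left v.2)⟩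
    rw [← himg]
    exact (isCompact_Icc).image (Continuous.subtype_mk (continuous_id.max continuous_const) _)
  exact hbox.of_isClosed_subset (hK.isClosed.preimage Gmap_continuous) hsub

set_option synthInstance.maxHeartbeats 1000000 in
lemma Gmap_isProperMap : IsProperMap (Gmap (k := k)) :=
  isProperMap_iff_isCompact_preimage.mpr
    ⟨Gmap_continuous, fun K hK => Gmap_isCompact_preimage K hK⟩

end StraightenAux

/-- Straightening of corners for the closed orthant: for `k ≥ 1` and
`D = {x ∈ [0,∞)^k : x₁⋯x_k = 0}`, there exists a homeomorphism
`H : D × [0,∞) → [0,∞)^k` such that `H(x,t)₁⋯H(x,t)_k = t` and `H(x,0) = x`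
for all `x ∈ D`, `t ∈ [0,∞)`. -/
theorem orthant_straightening (k : ℕ) (hk : 1 ≤ k) :
    ∃ H : ((orthantBoundary k) × (Set.Ici (0 : ℝ))) ≃ₜ Orthant k,
      (∀ (x : orthantBoundary k) (t : Set.Ici (0 : ℝ)),
          ∏ i, ((H (x, t)) i : ℝ) = (t : ℝ)) ∧
      (∀ x : orthantBoundary k, H (x, ⟨0, Set.self_mem_Ici⟩) = (x : Orthant k)) := by
  haveI : NeZero k := ⟨by omega⟩
  have hbij : Function.Bijective (Gmap (k := k)) := ⟨Gmap_injective, Gmap_surjective⟩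
  set e := Equiv.ofBijective _ hbij with hedef
  have hclosed : IsClosedMap (Gmap (k := k)) := Gmap_isProperMap.isClosedMap
  have hsymm : Continuous e.symm := by
    rw [continuous_iff_isClosed]
    intro C hC
    have heq : e.symm ⁻¹' C = Gmap '' C := (Equiv.image_eq_preimage_symm e C).symm
    rw [heq]
    exact hclosed C hC
  refine ⟨⟨e.symm, hsymm, Gmap_continuous⟩, ?_, ?_⟩
  · intro x t
    have h := e.apply_symm_apply (x, t)
    have h2 : ((Gmap (e.symm (x, t))).2 : ℝ) = (t : ℝ) :=
      congrArg (fun p : (orthantBoundary k) × (Set.Ici (0 : ℝ)) => ((p.2 : ℝ))) h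
    exact h2
  · intro x
    have hG : Gmap (x : Orthant k) = (x, ⟨0, Set.self_mem_Ici⟩) := by
      have homin : omin (x : Orthant k) = 0 := omin_eq_zero_of_mem x.2
      apply Prod.ext
      · apply Subtype.ext
        funext i
        apply Subtype.ext
        show ((x : Orthant k) i : ℝ) - omin (x : Orthant k) = ((x : Orthant k) i : ℝ)
        rw [homin, sub_zero]
      · exact Subtype.ext x.2
    show e.symm (x, ⟨0, Set.self_mem_Ici⟩) = (x : Orthant k)
    rw [Equiv.symm_apply_eq]
    exact hG.symm
end

section
/- For every integer k ≥ 1 and every real number t ≥ 0, the level set {x ∈ [0,∞)^k : x₁⋯x_k = t} (with its subspace topology) is homeomorphic to ℝ^{k−1}. In particular, for every t > 0 the level set {x ∈ [0,∞)^k : x₁⋯x_k = t} is homeomorphic to the boundary {x ∈ [0,∞)^k : x₁⋯x_k = 0}. -/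
/-- The level set `{x ∈ [0,∞)^k : x₁⋯x_k = t}` of the standard total boundary
defining function `ρ(x) = x₁⋯x_k` on the closed orthant. -/
def orthantLevel (k : ℕ) (t : ℝ) : Set (Orthant k) := {x | ∏ i, (x i : ℝ) = t}

namespace OrthantAux

variable {n : ℕ}

/-! ### The zero level set (the boundary) -/

/-- Extend `y : Fin n → ℝ` by `0` in the last coordinate. -/
noncomputable def ext (y : Fin n → ℝ) : Fin (n + 1) → ℝ := Fin.snoc y 0

lemma univ_ne : (Finset.univ : Finset (Fin (n + 1))).Nonempty :=
  ⟨⟨0, Nat.succ_pos n⟩, Finset.mem_univ _⟩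

/-- The minimum of the extension. -/
noncomputable def m (y : Fin n → ℝ) : ℝ := Finset.univ.inf' univ_ne (ext y)

lemma m_le (y : Fin n → ℝ) (i : Fin (n + 1)) : m y ≤ ext y i :=
  Finset.inf'_le _ (Finset.mem_univ i)

lemma exists_m (y : Fin n → ℝ) : ∃ i, ext y i = m y := by
  obtain ⟨i, -, hi⟩ := Finset.exists_mem_eq_inf' (univ_ne (n := n)) (ext y)
  exact ⟨i, hi.symm⟩

noncomputable def zeroInvFun (y : Fin n → ℝ) : Fin (n + 1) → ℝ := fun i => ext y i - m y

lemma zeroInvFun_nonneg (y : Fin n → ℝ) (i : Fin (n + 1)) : 0 ≤ zeroInvFun y i :=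
  sub_nonneg.2 (m_le y i)

lemma zeroInvFun_mem (y : Fin n → ℝ) :
    (fun i => (⟨zeroInvFun y i, zeroInvFun_nonneg y i⟩ : Set.Ici (0 : ℝ))) ∈
      orthantLevel (n + 1) 0 := by
  obtain ⟨j, hj⟩ := exists_m y
  have : zeroInvFun y j = 0 := by simp [zeroInvFun, hj]
  exact Finset.prod_eq_zero (Finset.mem_univ j) this

lemma mem_zero_iff {x : Orthant (n + 1)} :
    x ∈ orthantLevel (n + 1) 0 ↔ ∃ i, (x i : ℝ) = 0 := by
  simp only [orthantLevel, Set.mem_setOf_eq, Finset.prod_eq_zero_iff, Finset.mem_univ,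
    true_and]

/-- The zero level set is homeomorphic to `ℝⁿ`. -/
noncomputable def zeroHomeo (n : ℕ) : (orthantLevel (n + 1) 0) ≃ₜ (Fin n → ℝ) where
  toFun x := fun i => (x.1 i.castSucc : ℝ) - (x.1 (Fin.last n) : ℝ)
  invFun y := ⟨fun i => ⟨zeroInvFun y i, zeroInvFun_nonneg y i⟩, zeroInvFun_mem y⟩
  left_inv := by
    rintro ⟨x, hx⟩
    have hext : ∀ i, ext (fun i => (x i.castSucc : ℝ) - (x (Fin.last n) : ℝ)) i
        = (x i : ℝ) - (x (Fin.last n) : ℝ) := by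
      intro i
      refine Fin.lastCases ?_ ?_ i
      · simp [ext]
      · intro j; simp [ext]
    have hm : m (fun i => (x i.castSucc : ℝ) - (x (Fin.last n) : ℝ))
        = -(x (Fin.last n) : ℝ) := by
      obtain ⟨j, hj⟩ := mem_zero_iff.1 hx
      refine le_antisymm ?_ ?_
      · have := m_le (fun i => (x i.castSucc : ℝ) - (x (Fin.last n) : ℝ)) j
        rw [hext j, hj] at this; linarith
      · refine Finset.le_inf' _ _ fun i _ => ?_
        rw [hext i]
        have := (x i).2
        simp only [Set.mem_Ici] at this
        linarith
    ext i
    simp only [zeroInvFun, hext i, hm]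
    ring
  right_inv := by
    intro y
    funext i
    have h1 : zeroInvFun y i.castSucc = y i - m y := by simp [zeroInvFun, ext]
    have h2 : zeroInvFun y (Fin.last n) = 0 - m y := by simp [zeroInvFun, ext]
    simp only [h1, h2]
    ring
  continuous_toFun := by
    refine continuous_pi fun i => Continuous.sub ?_ ?_ <;>
      exact (continuous_subtype_val.comp
        ((continuous_apply _).comp continuous_subtype_val))
  continuous_invFun := by
    refine Continuous.subtype_mk (continuous_pi fun i => Continuous.subtype_mk ?_ _) _
    refine Continuous.sub ?_ ?_
    · refine Fin.lastCases ?_ ?_ i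
      · simpa [ext] using continuous_const
      · intro j; simpa [ext] using continuous_apply j
    · refine Continuous.finset_inf'_apply _ fun i _ => ?_
      refine Fin.lastCases ?_ ?_ i
      · simpa [ext] using continuous_const
      · intro j; simpa [ext] using continuous_apply j

/-! ### Positive level sets -/

lemma pos_of_mem {t : ℝ} (ht : 0 < t) {x : Orthant (n + 1)} (hx : x ∈ orthantLevel (n + 1) t)
    (i : Fin (n + 1)) : 0 < (x i : ℝ) := by
  rcases lt_or_eq_of_le (Set.mem_Ici.mp (x i).2) with h | h
  · exact h
  · exfalso
    have : (∏ j, (x j : ℝ)) = 0 := Finset.prod_eq_zero (Finset.mem_univ i) h.symm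
    rw [hx] at this; exact ht.ne' this

noncomputable def posInvFun (t : ℝ) (y : Fin n → ℝ) : Fin (n + 1) → ℝ :=
  Fin.snoc (fun i => Real.exp (y i)) (t * Real.exp (-∑ i, y i))

lemma posInvFun_nonneg {t : ℝ} (ht : 0 < t) (y : Fin n → ℝ) (i : Fin (n + 1)) :
    0 ≤ posInvFun t y i := by
  refine Fin.lastCases ?_ ?_ i
  · simp only [posInvFun, Fin.snoc_last]
    positivity
  · intro j
    simp only [posInvFun, Fin.snoc_castSucc]
    exact (Real.exp_pos _).le

lemma posInvFun_mem {t : ℝ} (ht : 0 < t) (y : Fin n → ℝ) :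
    (fun i => (⟨posInvFun t y i, posInvFun_nonneg ht y i⟩ : Set.Ici (0 : ℝ))) ∈
      orthantLevel (n + 1) t := by
  show (∏ i, posInvFun t y i) = t
  simp only [posInvFun, Fin.prod_snoc, ← Real.exp_sum]
  rw [mul_comm t, ← mul_assoc, ← Real.exp_add]
  simp

/-- A positive level set is homeomorphic to `ℝⁿ`. -/
noncomputable def posHomeo (n : ℕ) (t : ℝ) (ht : 0 < t) :
    (orthantLevel (n + 1) t) ≃ₜ (Fin n → ℝ) where
  toFun x := fun i => Real.log (x.1 i.castSucc : ℝ)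
  invFun y := ⟨fun i => ⟨posInvFun t y i, posInvFun_nonneg ht y i⟩, posInvFun_mem ht y⟩
  left_inv := by
    rintro ⟨x, hx⟩
    have hpos := pos_of_mem ht hx
    ext i
    refine Fin.lastCases ?_ ?_ i
    · simp only [posInvFun, Fin.snoc_last]
      have hP : (∏ j : Fin n, (x j.castSucc : ℝ)) * (x (Fin.last n) : ℝ) = t := by
        have h := hx
        rw [show (x ∈ orthantLevel (n + 1) t) ↔ (∏ j, (x j : ℝ)) = t from Iff.rfl,
          Fin.prod_univ_castSucc] at h
        exact h
      have hPpos : (0:ℝ) < ∏ j : Fin n, (x j.castSucc : ℝ) :=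
        Finset.prod_pos fun j _ => hpos _
      have : Real.exp (-∑ j : Fin n, Real.log (x j.castSucc : ℝ))
          = (∏ j : Fin n, (x j.castSucc : ℝ))⁻¹ := by
        rw [Real.exp_neg, Real.exp_sum]
        congr 1
        exact Finset.prod_congr rfl fun j _ => Real.exp_log (hpos _)
      rw [this, mul_inv_eq_iff_eq_mul₀ hPpos.ne', mul_comm]
      exact hP.symm
    · intro j
      simp only [posInvFun, Fin.snoc_castSucc]
      exact Real.exp_log (hpos _)
  right_inv := by
    intro y
    funext i
    simp [posInvFun, Real.log_exp]
  continuous_toFun := by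
    refine continuous_pi fun i => ?_
    rw [continuous_iff_continuousAt]
    intro x
    have hpos : (0:ℝ) < (x.1 i.castSucc : ℝ) := pos_of_mem ht x.2 _
    have hc : Continuous fun (z : ↥(orthantLevel (n + 1) t)) => ((z.1 i.castSucc : ℝ)) :=
      continuous_subtype_val.comp ((continuous_apply i.castSucc).comp continuous_subtype_val)
    exact hc.continuousAt.log hpos.ne'
  continuous_invFun := by
    refine Continuous.subtype_mk (continuous_pi fun i => Continuous.subtype_mk ?_ _) _
    refine Fin.lastCases ?_ ?_ i
    · simp only [posInvFun, Fin.snoc_last]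
      fun_prop
    · intro j
      simp only [posInvFun, Fin.snoc_castSucc]
      fun_prop

end OrthantAux

/-- For every integer `k ≥ 1` and every real `t ≥ 0`, the level set
`{x ∈ [0,∞)^k : x₁⋯x_k = t}` is homeomorphic to `ℝ^{k−1}`; in particular, for
every `t > 0` it is homeomorphic to the boundary `{x ∈ [0,∞)^k : x₁⋯x_k = 0}`. -/
theorem orthantLevel_homeo (k : ℕ) (hk : 1 ≤ k) :
    (∀ t : ℝ, 0 ≤ t →
      Nonempty ((orthantLevel k t) ≃ₜ (Fin (k - 1) → ℝ))) ∧
    (∀ t : ℝ, 0 < t →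
      Nonempty ((orthantLevel k t) ≃ₜ (orthantLevel k 0))) := by
  obtain ⟨n, rfl⟩ : ∃ n, k = n + 1 := ⟨k - 1, by omega⟩
  constructor
  · intro t ht
    rcases ht.lt_or_eq with h | h
    · exact ⟨OrthantAux.posHomeo n t h⟩
    · exact ⟨h ▸ OrthantAux.zeroHomeo n⟩
  · intro t ht
    exact ⟨(OrthantAux.posHomeo n t ht).trans (OrthantAux.zeroHomeo n).symm⟩
end

section
/- Let n ≥ k ≥ 1 and let D = {(x,y) ∈ [0,∞)^k × ℝ^{n−k} : x₁⋯x_k = 0}. There exists a homeomorphism H : D × [0,∞) → [0,∞)^k × ℝ^{n−k} such that, writing H((x,y),t) = (x',y'), one has x'₁⋯x'_k = t for all ((x,y),t), H((x,y),0) = (x,y), and moreover H preserves each coordinate hyperplane of the second factor: for every j ∈ {1,…,n−k}, H((x,y),t) has j-th second-factor coordinate zero if and only if y_j = 0. -/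
open Finset Set

/-- The corner model `[0,∞)^k × ℝ^{n−k}` with its (subspace/product) topology. -/
abbrev CornerModel (k m : ℕ) : Type := (Fin k → (Set.Ici (0 : ℝ))) × (Fin m → ℝ)

/-- The boundary `D = {(x,y) ∈ [0,∞)^k × ℝ^{n−k} : x₁⋯x_k = 0}`. -/
def cornerBoundary (k m : ℕ) : Set (CornerModel k m) := {p | ∏ i, (p.1 i : ℝ) = 0}

namespace CornerAux

variable {k m : ℕ}

lemma prodAdd_mono {b : Fin k → ℝ} (hb : ∀ i, 0 ≤ b i) {a s : ℝ}
    (ha : 0 ≤ a) (h : a ≤ s) : ∏ i, (b i + a) ≤ ∏ i, (b i + s) :=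
  Finset.prod_le_prod (fun i _ => by have := hb i; linarith)
    (fun i _ => by linarith)

lemma prodAdd_strictMono (hk : 1 ≤ k) {b : Fin k → ℝ} (hb : ∀ i, 0 ≤ b i) {a s : ℝ}
    (ha : 0 ≤ a) (h : a < s) : ∏ i, (b i + a) < ∏ i, (b i + s) := by
  have hs : 0 < s := lt_of_le_of_lt ha h
  have hpos : 0 < ∏ i, (b i + s) :=
    Finset.prod_pos (fun i _ => by have := hb i; linarith)
  by_cases hz : ∀ i, 0 < b i + a
  · exact Finset.prod_lt_prod_of_nonempty (fun i _ => hz i)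
      (fun i _ => by linarith) (Finset.univ_nonempty_iff.2 ⟨⟨0, hk⟩⟩)
  · push_neg at hz
    obtain ⟨i, hi⟩ := hz
    have hzero : b i + a = 0 := le_antisymm hi (by have := hb i; linarith)
    have : ∏ j, (b j + a) = 0 := Finset.prod_eq_zero (Finset.mem_univ i) hzero
    rw [this]; exact hpos

lemma root_exists_unique (hk : 1 ≤ k) {b : Fin k → ℝ} (hb : ∀ i, 0 ≤ b i)
    (hb0 : ∏ i, b i = 0) {t : ℝ} (ht : 0 ≤ t) :
    ∃! s : ℝ, 0 ≤ s ∧ ∏ i, (b i + s) = t := by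
  have hcont : Continuous fun s : ℝ => ∏ i, (b i + s) :=
    continuous_finset_prod _ fun i _ => continuous_const.add continuous_id
  set S : ℝ := max 1 t with hS
  have hS1 : (1:ℝ) ≤ S := le_max_left _ _
  have hSk : t ≤ ∏ i, (b i + S) := by
    calc t ≤ S := le_max_right _ _
    _ ≤ S ^ k := le_self_pow₀ (by linarith) (by omega)
    _ = ∏ _i : Fin k, S := by rw [Finset.prod_const, Finset.card_univ, Fintype.card_fin]
    _ ≤ ∏ i, (b i + S) := Finset.prod_le_prod (fun i _ => by linarith)
        (fun i _ => by have := hb i; linarith)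
  have h0 : ∏ i, (b i + 0) = 0 := by simpa using hb0
  have hiv : t ∈ (fun s => ∏ i, (b i + s)) '' Icc 0 S := by
    apply intermediate_value_Icc (by linarith) hcont.continuousOn
    constructor
    · rw [h0]; exact ht
    · exact hSk
  obtain ⟨s, hsmem, hseq⟩ := hiv
  have hseq2 : ∏ i, (b i + s) = t := hseq
  refine ⟨s, ⟨hsmem.1, hseq2⟩, ?_⟩
  rintro s' ⟨hs', hseq'⟩
  by_contra hne
  rcases lt_or_gt_of_ne hne with hlt | hlt
  · have := prodAdd_strictMono hk hb hs' hlt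
    rw [hseq2, hseq'] at this; exact lt_irrefl _ this
  · have := prodAdd_strictMono hk hb hsmem.1 hlt
    rw [hseq2, hseq'] at this; exact lt_irrefl _ this

/-- The domain of the straightening map. -/
abbrev Dom (k m : ℕ) : Type := (cornerBoundary k m) × (Set.Ici (0 : ℝ))

/-- The `x`-coordinates of the boundary point, as reals. -/
def bmap (z : Dom k m) : Fin k → ℝ := fun i => ((z.1 : CornerModel k m).1 i : ℝ)

lemma bmap_nonneg (z : Dom k m) (i : Fin k) : 0 ≤ bmap z i :=
  ((z.1 : CornerModel k m).1 i).2

lemma bmap_prod (z : Dom k m) : ∏ i, bmap z i = 0 := z.1.2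

lemma tval_nonneg (z : Dom k m) : (0:ℝ) ≤ (z.2 : ℝ) := z.2.2

/-- The unique `s ≥ 0` with `∏ (bᵢ + s) = t`. -/
noncomputable def sFun (hk : 1 ≤ k) (z : Dom k m) : ℝ :=
  (root_exists_unique hk (bmap_nonneg z) (bmap_prod z) (tval_nonneg z)).exists.choose

lemma sFun_nonneg (hk : 1 ≤ k) (z : Dom k m) : 0 ≤ sFun hk z :=
  (root_exists_unique hk (bmap_nonneg z) (bmap_prod z) (tval_nonneg z)).exists.choose_spec.1

lemma sFun_prod (hk : 1 ≤ k) (z : Dom k m) :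
    ∏ i, (bmap z i + sFun hk z) = (z.2 : ℝ) :=
  (root_exists_unique hk (bmap_nonneg z) (bmap_prod z) (tval_nonneg z)).exists.choose_spec.2

lemma sFun_eq (hk : 1 ≤ k) (z : Dom k m) {s : ℝ} (hs : 0 ≤ s)
    (hps : ∏ i, (bmap z i + s) = (z.2 : ℝ)) : s = sFun hk z := by
  have h := root_exists_unique hk (bmap_nonneg z) (bmap_prod z) (tval_nonneg z)
  exact h.unique ⟨hs, hps⟩ ⟨sFun_nonneg hk z, sFun_prod hk z⟩

lemma univ_nonempty (hk : 1 ≤ k) : (Finset.univ : Finset (Fin k)).Nonempty :=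
  Finset.univ_nonempty_iff.2 ⟨⟨0, hk⟩⟩

/-- The minimum of the `x`-coordinates. -/
noncomputable def mn (hk : 1 ≤ k) (x : Fin k → (Set.Ici (0:ℝ))) : ℝ :=
  Finset.univ.inf' (univ_nonempty hk) fun i => (x i : ℝ)

lemma mn_le (hk : 1 ≤ k) (x : Fin k → (Set.Ici (0:ℝ))) (i : Fin k) :
    mn hk x ≤ (x i : ℝ) := Finset.inf'_le _ (Finset.mem_univ i)

lemma mn_nonneg (hk : 1 ≤ k) (x : Fin k → (Set.Ici (0:ℝ))) : 0 ≤ mn hk x :=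
  Finset.le_inf' _ _ fun i _ => (x i).2

lemma exists_mn (hk : 1 ≤ k) (x : Fin k → (Set.Ici (0:ℝ))) :
    ∃ i, mn hk x = (x i : ℝ) := by
  obtain ⟨i, _, h⟩ := Finset.exists_mem_eq_inf' (univ_nonempty hk) fun i => ((x i : ℝ))
  exact ⟨i, h⟩

/-- Forward map. -/
noncomputable def Fwd (hk : 1 ≤ k) (z : Dom k m) : CornerModel k m :=
  (fun i => ⟨bmap z i + sFun hk z, add_nonneg (bmap_nonneg z i) (sFun_nonneg hk z)⟩,
    (z.1 : CornerModel k m).2)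

/-- Backward map. -/
noncomputable def Bwd (hk : 1 ≤ k) (q : CornerModel k m) : Dom k m :=
  (⟨(fun i => ⟨(q.1 i : ℝ) - mn hk q.1, sub_nonneg.2 (mn_le hk q.1 i)⟩, q.2), by
      obtain ⟨i₀, hi₀⟩ := exists_mn hk q.1
      exact Finset.prod_eq_zero (Finset.mem_univ i₀) (by simp [hi₀])⟩,
    ⟨∏ i, (q.1 i : ℝ), Set.mem_Ici.2 (Finset.prod_nonneg fun i _ => Set.mem_Ici.1 (q.1 i).2)⟩)

lemma Bwd_Fwd (hk : 1 ≤ k) (z : Dom k m) : Bwd hk (Fwd hk z) = z := by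
  obtain ⟨⟨⟨x, y⟩, hxy⟩, t⟩ := z
  have hb : ∀ i, bmap (⟨⟨x, y⟩, hxy⟩, t) i = (x i : ℝ) := fun i => rfl
  set z : Dom k m := (⟨⟨x, y⟩, hxy⟩, t)
  set s := sFun hk z with hs
  -- min of (x i + s) is s
  obtain ⟨i₀, hx0⟩ : ∃ i, (x i : ℝ) = 0 := by
    have := bmap_prod z
    simp only [hb] at this
    obtain ⟨i, _, h⟩ := Finset.prod_eq_zero_iff.1 this
    exact ⟨i, h⟩
  have hmn : mn hk (Fwd hk z).1 = s := by
    apply le_antisymm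
    · calc mn hk (Fwd hk z).1 ≤ ((Fwd hk z).1 i₀ : ℝ) := mn_le hk _ i₀
      _ = s := by show bmap z i₀ + s = s; rw [hb, hx0, zero_add]
    · exact Finset.le_inf' _ _ fun i _ => by
        have h := Set.mem_Ici.1 (x i).2
        show s ≤ bmap z i + sFun hk z
        linarith [hb i, hs]
  apply Prod.ext
  · apply Subtype.ext
    apply Prod.ext
    · funext i
      apply Subtype.ext
      show ((Fwd hk z).1 i : ℝ) - mn hk (Fwd hk z).1 = (x i : ℝ)
      rw [hmn]
      show bmap z i + s - s = (x i : ℝ)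
      rw [hb]; ring
    · rfl
  · apply Subtype.ext
    show ∏ i, ((Fwd hk z).1 i : ℝ) = (t : ℝ)
    simpa [Fwd, hb] using sFun_prod hk z

lemma Fwd_Bwd (hk : 1 ≤ k) (q : CornerModel k m) : Fwd hk (Bwd hk q) = q := by
  set w : Dom k m := Bwd hk q with hw
  have hbw : ∀ i, bmap w i = (q.1 i : ℝ) - mn hk q.1 := fun i => rfl
  have htw : (w.2 : ℝ) = ∏ i, (q.1 i : ℝ) := rfl
  have hsw : sFun hk w = mn hk q.1 := by
    refine (sFun_eq hk w (mn_nonneg hk q.1) ?_).symm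
    rw [htw]
    exact Finset.prod_congr rfl fun i _ => by rw [hbw]; ring
  apply Prod.ext
  · funext i
    apply Subtype.ext
    show bmap w i + sFun hk w = (q.1 i : ℝ)
    rw [hbw, hsw]; ring
  · rfl

lemma cont_bmap (i : Fin k) : Continuous fun z : Dom k m => bmap z i :=
  continuous_subtype_val.comp ((continuous_apply i).comp
    (continuous_fst.comp (continuous_subtype_val.comp continuous_fst)))

lemma cont_tval : Continuous fun z : Dom k m => (z.2 : ℝ) :=
  continuous_subtype_val.comp continuous_snd

lemma cont_sFun (hk : 1 ≤ k) : Continuous (sFun hk : Dom k m → ℝ) := by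
  rw [continuous_iff_continuousAt]
  intro z₀
  apply tendsto_order.2
  constructor
  · intro a ha
    rcases lt_or_ge a 0 with h | h
    · exact Filter.Eventually.of_forall fun z => lt_of_lt_of_le h (sFun_nonneg hk z)
    · have hlt : ∏ i, (bmap z₀ i + a) < ((z₀.2 : ℝ)) := by
        rw [← sFun_prod hk z₀]
        exact prodAdd_strictMono hk (bmap_nonneg z₀) h ha
      have hc1 : Continuous fun z : Dom k m => ∏ i, (bmap z i + a) :=
        continuous_finset_prod _ fun i _ => (cont_bmap i).add continuous_const
      have hev := hc1.continuousAt.eventually_lt cont_tval.continuousAt hlt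
      refine hev.mono fun z hz => ?_
      by_contra hle
      push_neg at hle
      have hmono := prodAdd_mono (bmap_nonneg z) (sFun_nonneg hk z) hle
      rw [sFun_prod hk z] at hmono
      exact absurd hz (not_lt.2 hmono)
  · intro a ha
    have h0a : 0 ≤ a := le_trans (sFun_nonneg hk z₀) ha.le
    have hlt : ((z₀.2 : ℝ)) < ∏ i, (bmap z₀ i + a) := by
      rw [← sFun_prod hk z₀]
      exact prodAdd_strictMono hk (bmap_nonneg z₀) (sFun_nonneg hk z₀) ha
    have hc1 : Continuous fun z : Dom k m => ∏ i, (bmap z i + a) :=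
      continuous_finset_prod _ fun i _ => (cont_bmap i).add continuous_const
    have hev := cont_tval.continuousAt.eventually_lt hc1.continuousAt hlt
    refine hev.mono fun z hz => ?_
    by_contra hle
    push_neg at hle
    have hmono := prodAdd_mono (bmap_nonneg z) h0a hle
    rw [sFun_prod hk z] at hmono
    exact absurd hz (not_lt.2 hmono)

lemma cont_Fwd (hk : 1 ≤ k) : Continuous (Fwd hk : Dom k m → CornerModel k m) := by
  unfold Fwd
  exact Continuous.prodMk
    (continuous_pi fun i => Continuous.subtype_mk ((cont_bmap i).add (cont_sFun hk)) _)
    (continuous_snd.comp (continuous_subtype_val.comp continuous_fst))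

lemma cont_mn (hk : 1 ≤ k) : Continuous fun q : CornerModel k m => mn hk q.1 :=
  Continuous.finset_inf'_apply (univ_nonempty hk) fun i _ =>
    continuous_subtype_val.comp ((continuous_apply i).comp continuous_fst)

lemma cont_Bwd (hk : 1 ≤ k) : Continuous (Bwd hk : CornerModel k m → Dom k m) := by
  unfold Bwd
  refine Continuous.prodMk (Continuous.subtype_mk ?_ _) (Continuous.subtype_mk ?_ _)
  · refine Continuous.prodMk (continuous_pi fun i => Continuous.subtype_mk ?_ _) continuous_snd
    exact (continuous_subtype_val.comp ((continuous_apply i).comp continuous_fst)).sub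
      (cont_mn hk)
  · exact continuous_finset_prod _ fun i _ =>
      continuous_subtype_val.comp ((continuous_apply i).comp continuous_fst)

/-- The straightening homeomorphism. -/
noncomputable def straightHomeo (hk : 1 ≤ k) : Dom k m ≃ₜ CornerModel k m where
  toFun := Fwd hk
  invFun := Bwd hk
  left_inv := Bwd_Fwd hk
  right_inv := Fwd_Bwd hk
  continuous_toFun := cont_Fwd hk
  continuous_invFun := cont_Bwd hk

end CornerAux

/-- Relative straightening of corners: for `n = k + m ≥ k ≥ 1` and
`D = {(x,y) ∈ [0,∞)^k × ℝ^{n−k} : x₁⋯x_k = 0}`, there is a homeomorphism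
`H : D × [0,∞) → [0,∞)^k × ℝ^{n−k}` such that, writing `H((x,y),t) = (x',y')`,
one has `x'₁⋯x'_k = t`, `H((x,y),0) = (x,y)`, and `H` preserves each coordinate
hyperplane of the second factor: the `j`-th second-factor coordinate of
`H((x,y),t)` vanishes if and only if `y_j = 0`. -/
theorem corner_relative_straightening (k m : ℕ) (hk : 1 ≤ k) :
    ∃ H : ((cornerBoundary k m) × (Set.Ici (0 : ℝ))) ≃ₜ CornerModel k m,
      (∀ (p : cornerBoundary k m) (t : Set.Ici (0 : ℝ)),
          ∏ i, ((H (p, t)).1 i : ℝ) = (t : ℝ)) ∧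
      (∀ p : cornerBoundary k m,
          H (p, ⟨0, Set.self_mem_Ici⟩) = (p : CornerModel k m)) ∧
      (∀ (p : cornerBoundary k m) (t : Set.Ici (0 : ℝ)) (j : Fin m),
          (H (p, t)).2 j = 0 ↔ (p : CornerModel k m).2 j = 0) := by
  classical
  refine ⟨CornerAux.straightHomeo hk, ?_, ?_, ?_⟩
  · intro p t
    exact CornerAux.sFun_prod hk (p, t)
  · intro p
    set z : CornerAux.Dom k m := (p, ⟨0, Set.self_mem_Ici⟩) with hz
    have hs0 : CornerAux.sFun hk z = 0 := by
      refine (CornerAux.sFun_eq hk z le_rfl ?_).symm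
      show ∏ i, (CornerAux.bmap z i + 0) = (0 : ℝ)
      simpa using CornerAux.bmap_prod z
    apply Prod.ext
    · funext i
      apply Subtype.ext
      show CornerAux.bmap z i + CornerAux.sFun hk z = ((p : CornerModel k m).1 i : ℝ)
      rw [hs0, add_zero]; rfl
    · rfl
  · intro p t j
    exact Iff.rfl
end
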